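/- Let (Ω, ℱ, P) be a probability space and 𝒜, ℬ, 𝒞 sub-σ-fields of ℱ. Suppose 𝒜 ⊆ ℬ ∨ 𝒞 up to null sets, and 𝒜 ∨ ℬ is independent of 𝒞. Then 𝒜 ⊆ ℬ up to null sets. -/

import Mathlib

open scoped symmDiff

open MeasureTheory ProbabilityTheory

/-- Let `(Ω, ℱ, P)` be a probability space and `𝒜, ℬ, 𝒞` sub-σ-fields of `ℱ`.
If `𝒜 ⊆ ℬ ∨ 𝒞` up to null sets and `𝒜 ∨ ℬ` is independent of `𝒞`, then `𝒜 ⊆ ℬ`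
up to null sets. -/
theorem stmt_18 {Ω : Type*} [ℱ : MeasurableSpace Ω]
    (P : MeasureTheory.Measure Ω) [MeasureTheory.IsProbabilityMeasure P]
    (𝒜 ℬ 𝒞 : MeasurableSpace Ω)
    (h𝒜 : 𝒜 ≤ ℱ) (hℬ : ℬ ≤ ℱ) (h𝒞 : 𝒞 ≤ ℱ)
    (hsub : ∀ A : Set Ω, @MeasurableSet Ω 𝒜 A →
      ∃ B : Set Ω, @MeasurableSet Ω (ℬ ⊔ 𝒞) B ∧ P (A ∆ B) = 0)
    (hindep : ProbabilityTheory.Indep (𝒜 ⊔ ℬ) 𝒞 P) :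
    ∀ A : Set Ω, @MeasurableSet Ω 𝒜 A →
      ∃ B : Set Ω, @MeasurableSet Ω ℬ B ∧ P (A ∆ B) = 0 := by
  intro A hA
  letI : MeasurableSpace Ω := ℱ
  have hm : ℬ ⊔ 𝒞 ≤ ℱ := sup_le hℬ h𝒞
  have hAF : MeasurableSet[ℱ] A := h𝒜 A hA
  set f : Ω → ℝ := A.indicator 1 with hf_def
  have hf_int : Integrable f P := (integrable_const (1 : ℝ)).indicator hAF
  haveI : SigmaFinite (P.trim hm) := by
    have : IsFiniteMeasure (P.trim hm) := isFiniteMeasure_trim hm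
    infer_instance
  haveI : SigmaFinite (P.trim hℬ) := by
    have : IsFiniteMeasure (P.trim hℬ) := isFiniteMeasure_trim hℬ
    infer_instance
  set g : Ω → ℝ := P[f|ℬ] with hg_def
  have hg_meas : StronglyMeasurable[ℬ] g := stronglyMeasurable_condExp
  have hg_int : Integrable g P := integrable_condExp
  -- the π-system generating ℬ ⊔ 𝒞
  set p : Set (Set Ω) :=
    {t | ∃ B C, MeasurableSet[ℬ] B ∧ MeasurableSet[𝒞] C ∧ t = B ∩ C} with hp_def
  have hp_pi : IsPiSystem p := by
    rintro s ⟨B₁, C₁, hB₁, hC₁, rfl⟩ t ⟨B₂, C₂, hB₂, hC₂, rfl⟩ -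
    exact ⟨B₁ ∩ B₂, C₁ ∩ C₂, hB₁.inter hB₂, hC₁.inter hC₂, by
      ext x; simp; tauto⟩
  have h_gen : (ℬ ⊔ 𝒞) = MeasurableSpace.generateFrom p := by
    refine le_antisymm (sup_le ?_ ?_) (MeasurableSpace.generateFrom_le ?_)
    · intro s hs
      exact MeasurableSpace.measurableSet_generateFrom
        ⟨s, Set.univ, hs, MeasurableSet.univ, (Set.inter_univ s).symm⟩
    · intro s hs
      exact MeasurableSpace.measurableSet_generateFrom
        ⟨Set.univ, s, MeasurableSet.univ, hs, (Set.univ_inter s).symm⟩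
    · rintro t ⟨B, C, hB, hC, rfl⟩
      exact ((le_sup_left : ℬ ≤ ℬ ⊔ 𝒞) B hB).inter ((le_sup_right : 𝒞 ≤ ℬ ⊔ 𝒞) C hC)
  have hindepBC : Indep ℬ 𝒞 P := indep_of_indep_of_le_left hindep le_sup_right
  -- key set-integral identity
  have h_int_eq : ∀ s, MeasurableSet[ℬ ⊔ 𝒞] s →
      ∫ x in s, g x ∂P = ∫ x in s, f x ∂P := by
    refine @MeasurableSpace.induction_on_inter Ω (ℬ ⊔ 𝒞)
      (fun s _ => ∫ x in s, g x ∂P = ∫ x in s, f x ∂P) p h_gen hp_pi ?_ ?_ ?_ ?_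
    · simp
    · rintro t ⟨B, C, hB, hC, rfl⟩
      have hBF : MeasurableSet[ℱ] B := hℬ B hB
      have hCF : MeasurableSet[ℱ] C := h𝒞 C hC
      -- RHS
      have hR : ∫ x in B ∩ C, f x ∂P = (P ((A ∩ B) ∩ C)).toReal := by
        rw [hf_def, setIntegral_indicator hAF]
        simp only [Pi.one_apply]
        rw [setIntegral_const, smul_eq_mul, mul_one]
        have h : B ∩ C ∩ A = (A ∩ B) ∩ C := by ext x; simp; tauto
        rw [h, measureReal_def]
      -- LHS via independence of functions
      have hXm : Measurable[ℬ] (B.indicator g) := hg_meas.measurable.indicator hB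
      have hYm : Measurable[𝒞] (C.indicator (1 : Ω → ℝ)) :=
        (@measurable_const ℝ Ω _ 𝒞 1).indicator hC
      have hIF : IndepFun (B.indicator g) (C.indicator (1 : Ω → ℝ)) P := by
        rw [IndepFun_iff_Indep]
        exact indep_of_indep_of_le_right
          (indep_of_indep_of_le_left hindepBC hXm.comap_le) hYm.comap_le
      have hXi : Integrable (B.indicator g) P := hg_int.indicator hBF
      have hYi : Integrable (C.indicator (1 : Ω → ℝ)) P :=
        (integrable_const (1 : ℝ)).indicator hCF
      have hmul : (B ∩ C).indicator g = B.indicator g * C.indicator (1 : Ω → ℝ) := by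
        funext x
        by_cases hxB : x ∈ B <;> by_cases hxC : x ∈ C <;>
          simp [Set.indicator, hxB, hxC]
      have hL : ∫ x in B ∩ C, g x ∂P
          = (∫ x in B, g x ∂P) * (P C).toReal := by
        rw [← integral_indicator (hBF.inter hCF), hmul,
          hIF.integral_mul_eq_mul_integral hXi.aestronglyMeasurable hYi.aestronglyMeasurable, integral_indicator hBF,
          integral_indicator hCF]
        simp only [Pi.one_apply]
        rw [setIntegral_const, smul_eq_mul, mul_one, measureReal_def]
      have hBg : ∫ x in B, g x ∂P = (P (A ∩ B)).toReal := by
        rw [hg_def, setIntegral_condExp hℬ hf_int hB, hf_def,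
          setIntegral_indicator hAF]
        simp only [Pi.one_apply]
        rw [setIntegral_const, smul_eq_mul, mul_one, Set.inter_comm, measureReal_def]
      have hABmeas : MeasurableSet[𝒜 ⊔ ℬ] (A ∩ B) :=
        ((le_sup_left : 𝒜 ≤ 𝒜 ⊔ ℬ) A hA).inter ((le_sup_right : ℬ ≤ 𝒜 ⊔ ℬ) B hB)
      have hInd : P ((A ∩ B) ∩ C) = P (A ∩ B) * P C :=
        (ProbabilityTheory.Indep_iff _ _ _).mp hindep _ _ hABmeas hC
      rw [hL, hBg, hR, hInd, ENNReal.toReal_mul]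
    · intro t htm ih
      have htF : MeasurableSet[ℱ] t := hm t htm
      have h1 := integral_add_compl htF hg_int
      have h2 := integral_add_compl htF hf_int
      have h3 : ∫ x, g x ∂P = ∫ x, f x ∂P := integral_condExp hℬ
      linarith
    · intro s hdisj hmeas ih
      have hsF : ∀ i, MeasurableSet[ℱ] (s i) := fun i => hm _ (hmeas i)
      rw [integral_iUnion hsF hdisj hg_int.integrableOn,
        integral_iUnion hsF hdisj hf_int.integrableOn]
      exact tsum_congr ih
  -- g is a version of the conditional expectation given ℬ ⊔ 𝒞
  have hgm' : AEStronglyMeasurable[ℬ ⊔ 𝒞] g P :=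
    StronglyMeasurable.aestronglyMeasurable (hg_meas.mono le_sup_left)
  have hg_eq : g =ᵐ[P] P[f|ℬ ⊔ 𝒞] :=
    ae_eq_condExp_of_forall_setIntegral_eq hm hf_int
      (fun s _ _ => hg_int.integrableOn) (fun s hs _ => h_int_eq s hs) hgm'
  -- f is a.e. equal to its conditional expectation given ℬ ⊔ 𝒞
  obtain ⟨B₀, hB₀, hB₀null⟩ := hsub A hA
  have hfB : f =ᵐ[P] B₀.indicator (1 : Ω → ℝ) := by
    have hsubset : {x | f x ≠ B₀.indicator 1 x} ⊆ A ∆ B₀ := by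
      intro x hx
      by_cases hxA : x ∈ A <;> by_cases hxB : x ∈ B₀ <;>
        simp [hf_def, Set.indicator, hxA, hxB, Set.mem_symmDiff] at hx ⊢ <;> tauto
    exact (measure_mono_null hsubset hB₀null)
  have hcondB : P[(B₀.indicator (1 : Ω → ℝ))|ℬ ⊔ 𝒞] = B₀.indicator 1 :=
    condExp_of_stronglyMeasurable hm
      ((stronglyMeasurable_one : StronglyMeasurable[ℬ ⊔ 𝒞] (1 : Ω → ℝ)).indicator hB₀) ((integrable_const (1 : ℝ)).indicator (hm _ hB₀))
  have hfcond : f =ᵐ[P] P[f|ℬ ⊔ 𝒞] := by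
    calc f =ᵐ[P] B₀.indicator 1 := hfB
    _ = P[(B₀.indicator (1 : Ω → ℝ))|ℬ ⊔ 𝒞] := hcondB.symm
    _ =ᵐ[P] P[f|ℬ ⊔ 𝒞] := condExp_congr_ae hfB.symm
  have hfg : f =ᵐ[P] g := hfcond.trans hg_eq.symm
  -- extract the set
  refine ⟨g ⁻¹' {1}, hg_meas.measurable (measurableSet_singleton 1), ?_⟩
  have hsubset : A ∆ (g ⁻¹' {1}) ⊆ {x | f x ≠ g x} := by
    intro x hx
    rcases hx with ⟨hxA, hxB⟩ | ⟨hxB, hxA⟩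
    · intro h
      apply hxB
      simp only [Set.mem_preimage, Set.mem_singleton_iff]
      rw [← h, hf_def, Set.indicator_of_mem hxA, Pi.one_apply]
    · simp only [Set.mem_preimage, Set.mem_singleton_iff] at hxB
      intro h
      rw [hf_def, Set.indicator_of_notMem hxA, hxB] at h
      norm_num at h
  refine measure_mono_null hsubset ?_
  exact hfg
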